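/- arXiv:1907.06357 — 2 statements merged into one kernel-verified Lean document; each statement's English description precedes it below -/
import Mathlib

section
/- Let q be a prime power and write m = qt + r with t ≥ 1, 0 ≤ r ≤ q-1, m < q^2, and t ≥ q - r - 1. Consider the Reed-Solomon-type code C over F_{q^2} of length n = q^2 spanned by the evaluations of 1, x, ..., x^m at all q^2 elements of F_{q^2}. Then dim(C ∩ C^{⊥_h}) = (q-t-1)(t+1) + q - r - 1. -/
open scoped BigOperators

/-- The Reed-Solomon-type code of length `|F|` spanned by the evaluations of
`1, x, ..., x^m` at all elements of `F`: the evaluation vectors of all polynomials of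
degree at most `m`. -/
def RScode (F : Type) [Field F] (m : ℕ) : Set (F → F) :=
  {w | ∃ f : Polynomial F, f.natDegree ≤ m ∧ ∀ a : F, w a = f.eval a}

/-- The Hermitian dual (with respect to `x ↦ x^q`) of a code indexed by `F`. -/
def hermDualF {F : Type} [Field F] [Fintype F] (q : ℕ) (C : Set (F → F)) : Set (F → F) :=
  {x | ∀ c ∈ C, ∑ a : F, x a * (c a) ^ q = 0}

open Finset Polynomial

set_option linter.unusedSectionVars false
set_option linter.unusedVariables false
set_option linter.unnecessarySimpa false

/-- The evaluation vector of the monomial `x^e`. -/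
def mono (F : Type) [Field F] (e : ℕ) : F → F := fun a => a ^ e

/-- The exponents `i ≤ m` killed by the Hermitian duality conditions. -/
def Sset (q m : ℕ) : Finset ℕ :=
  (Finset.range (m+1)).filter
    (fun i => ∃ j ∈ Finset.range (m+1), i + q*j ≠ 0 ∧ (q^2 - 1) ∣ (i + q*j))

/-- The surviving exponents. -/
def Tset (q m : ℕ) : Finset ℕ := Finset.range (m+1) \ Sset q m

section basic
variable {F : Type} [Field F] [Fintype F]

theorem sum_pow_eval (e : ℕ) :
    ∑ a : F, a ^ e = if e ≠ 0 ∧ (Fintype.card F - 1) ∣ e then -1 else 0 := by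
  classical
  rcases eq_or_ne e 0 with rfl | he
  · simp [FiniteField.cast_card_eq_zero]
  · have key : ∑ a : F, a ^ e = ∑ x : Fˣ, ((x : F) ^ e) := by
      let φ : Fˣ ↪ F := ⟨fun x ↦ x, Units.val_injective⟩
      have h1 : univ.map φ = univ \ {0} := by
        ext x
        simpa only [mem_map, mem_univ, Function.Embedding.coeFn_mk, true_and, mem_sdiff,
          mem_singleton, φ] using (show (∃ a : Fˣ, (a : F) = x) ↔ ¬x = 0 from isUnit_iff_ne_zero)
      calc
        ∑ x : F, x ^ e = ∑ x ∈ univ \ {(0 : F)}, x ^ e := by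
          rw [← sum_sdiff ({0} : Finset F).subset_univ, sum_singleton, zero_pow he, add_zero]
        _ = ∑ x : Fˣ, ((x : F) ^ e) := by simp [φ, ← h1, univ.sum_map φ]
    rw [key, FiniteField.sum_pow_units F e]
    simp [he]

theorem mono_li : LinearIndependent F (fun e : Fin (Fintype.card F) => mono F e) := by
  rw [Fintype.linearIndependent_iff]
  intro g hg i
  have hQ : 0 < Fintype.card F := Fintype.card_pos
  set f : Polynomial F := ∑ e : Fin (Fintype.card F), Polynomial.C (g e) * Polynomial.X ^ (e : ℕ)
    with hf
  have hev : ∀ a : F, f.eval a = 0 := by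
    intro a
    have := congrFun hg a
    simpa [f, mono, Polynomial.eval_finset_sum] using this
  have hdeg : f.natDegree < Fintype.card F := by
    have h2 : f.natDegree ≤ Fintype.card F - 1 := by
      apply Polynomial.natDegree_sum_le_of_forall_le
      intro e _
      calc (Polynomial.C (g e) * Polynomial.X ^ (e:ℕ)).natDegree
          ≤ (Polynomial.X ^ (e:ℕ) : Polynomial F).natDegree :=
            Polynomial.natDegree_C_mul_le (g e) (Polynomial.X ^ (e:ℕ))
        _ ≤ Fintype.card F - 1 := by
            rw [Polynomial.natDegree_X_pow]
            exact Nat.le_sub_one_of_lt e.2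
    omega
  have hf0 : f = 0 :=
    Polynomial.eq_zero_of_natDegree_lt_card_of_eval_eq_zero f Function.injective_id hev
      (by simpa using hdeg)
  have hco : f.coeff i = g i := by
    rw [hf, Polynomial.finset_sum_coeff]
    simp only [Polynomial.coeff_C_mul, Polynomial.coeff_X_pow]
    rw [Finset.sum_eq_single i] <;> simp +contextual [Fin.val_eq_val, eq_comm]
  rw [hf0] at hco
  simpa using hco.symm

theorem eval_split (m : ℕ) (f : Polynomial F) (hf : f.natDegree ≤ m) (a : F) :
    f.eval a = ∑ i ∈ range (m+1), f.coeff i * a ^ i :=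
  Polynomial.eval_eq_sum_range' (Nat.lt_succ_of_le hf) a

theorem mono_mem_RS (m e : ℕ) (he : e ≤ m) : mono F e ∈ RScode F m :=
  ⟨Polynomial.X ^ e, by simpa using he, fun a => by simp [mono]⟩

end basic

theorem nat_coprime (q : ℕ) (hq : 1 ≤ q) : Nat.Coprime (q^2 - 1) q := by
  have h1 : (q^2-1).gcd q ∣ q^2 - 1 := Nat.gcd_dvd_left _ _
  have h2 : (q^2-1).gcd q ∣ q * q := Dvd.dvd.mul_left (Nat.gcd_dvd_right _ _) q
  have h5 : (q^2-1).gcd q ∣ q*q - (q^2-1) := Nat.dvd_sub h2 h1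
  have h3 : q * q - (q^2 - 1) = 1 := by
    rw [← sq]
    exact Nat.sub_sub_self (pow_pos (by omega : 0 < q) 2)
  rw [h3] at h5
  exact Nat.eq_one_of_dvd_one h5

/-- uniqueness of the matching exponent -/
theorem unique_match {Q i i' n : ℕ} (hQ : 2 ≤ Q) (hi : i ≤ Q - 1) (hi' : i' ≤ Q - 1)
    (hnd : ¬ (Q - 1) ∣ i) (h : (Q - 1) ∣ (i + n)) (h' : (Q - 1) ∣ (i' + n)) : i' = i := by
  rcases Nat.le_total i i' with hle | hle
  · have hd : (Q - 1) ∣ (i' - i) := by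
      have := Nat.dvd_sub h' h
      rwa [Nat.add_sub_add_right] at this
    rcases Nat.eq_zero_or_pos (i' - i) with h0 | h0
    · omega
    · have := Nat.le_of_dvd h0 hd
      have hi0 : i = 0 := by omega
      exact absurd (hi0 ▸ Nat.dvd_zero _) hnd
  · have hd : (Q - 1) ∣ (i - i') := by
      have := Nat.dvd_sub h h'
      rwa [Nat.add_sub_add_right] at this
    rcases Nat.eq_zero_or_pos (i - i') with h0 | h0
    · omega
    · have := Nat.le_of_dvd h0 hd
      have : i = Q - 1 := by omega
      exact absurd (this ▸ dvd_refl _) hnd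

theorem coeffs_vanish {F : Type} [Field F] (q m : ℕ) (hq2 : 2 ≤ q)
    (hmq : m < q^2) (c : ℕ → F)
    (hkey : ∀ j ∈ range (m+1), ∑ i ∈ range (m+1), c i *
          (if i + q*j ≠ 0 ∧ (q^2 - 1) ∣ (i + q*j) then (-1 : F) else 0) = 0) :
    ∀ i ∈ Sset q m, c i = 0 := by
  have hQ4 : 4 ≤ q^2 := by calc (4:ℕ) = 2^2 := rfl
                                _ ≤ q^2 := Nat.pow_le_pow_left hq2 2
  have hm1 : m ≤ q^2 - 1 := by omega
  have stepA : q^2 - 1 ≤ m → c (q^2 - 1) = 0 := by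
    intro hQm
    have h0 := hkey 0 (by simp)
    simp only [mul_zero, add_zero] at h0
    rw [Finset.sum_eq_single (q^2-1)] at h0
    · rw [if_pos ⟨by omega, dvd_refl _⟩] at h0
      simpa using h0
    · intro i hi hne
      rw [if_neg, mul_zero]
      rintro ⟨hine, hidvd⟩
      have := Nat.le_of_dvd (by omega) hidvd
      rw [mem_range] at hi
      omega
    · intro h
      exact absurd (mem_range.mpr (by omega)) h
  intro i hi
  rw [Sset, mem_filter, mem_range] at hi
  obtain ⟨hile, j, hj, hne, hdvd⟩ := hi
  rw [mem_range] at hj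
  by_cases hdi : (q^2 - 1) ∣ i
  · rcases Nat.eq_zero_or_pos i with rfl | hipos
    · have hdj : (q^2 - 1) ∣ j :=
        (nat_coprime q (by omega)).dvd_of_dvd_mul_left (by simpa using hdvd)
      have hjne : j ≠ 0 := by rintro rfl; simp at hne
      have hQm : q^2 - 1 ≤ m := le_trans (Nat.le_of_dvd (by omega) hdj) (by omega)
      have hcQ : c (q^2 - 1) = 0 := stepA hQm
      have h0 := hkey (q^2-1) (mem_range.mpr (by omega))
      rw [Finset.sum_eq_single 0] at h0
      · rw [if_pos] at h0
        · simpa using h0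
        · constructor
          · have : q * (q^2-1) ≠ 0 := Nat.mul_ne_zero (by omega) (by omega)
            omega
          · simpa using Dvd.dvd.mul_left (dvd_refl (q^2-1)) q
      · intro i' hi' hne'
        rw [mem_range] at hi'
        by_cases hiQ : i' = q^2 - 1
        · rw [hiQ, hcQ, zero_mul]
        · rw [if_neg, mul_zero]
          rintro ⟨h1, h2⟩
          have hdvd' : (q^2-1) ∣ i' := by
            have hqd : (q^2-1) ∣ q * (q^2-1) := Dvd.dvd.mul_left (dvd_refl _) q
            have := Nat.dvd_sub h2 hqd
            simpa using this
          rcases Nat.eq_zero_or_pos i' with rfl | hp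
          · exact hne' rfl
          · have := Nat.le_of_dvd hp hdvd'
            omega
      · intro h; exact absurd (mem_range.mpr (by omega)) h
    · have := Nat.le_of_dvd hipos hdi
      have hieq : i = q^2 - 1 := by omega
      exact hieq ▸ stepA (by omega)
  · have h0 := hkey j (mem_range.mpr (by omega))
    rw [Finset.sum_eq_single i] at h0
    · rw [if_pos ⟨hne, hdvd⟩] at h0
      simpa using h0
    · intro i' hi' hne'
      rw [mem_range] at hi'
      rw [if_neg, mul_zero]
      rintro ⟨h1, h2⟩
      exact hne' (unique_match (by omega) (by omega) (by omega) hdi hdvd h2)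
    · intro h; exact absurd (mem_range.mpr (by omega)) h

theorem exists_iff (q m i : ℕ) (hq2 : 2 ≤ q) (hmq : m < q^2) (hi : i ≤ m) :
    (∃ j ∈ Finset.range (m+1), i + q*j ≠ 0 ∧ (q^2-1) ∣ (i + q*j))
      ↔ ((i ≠ 0 ∧ q^2 - 1 - ((i % q)*q + i / q) ≤ m) ∨ (i = 0 ∧ q^2 - 1 ≤ m)) := by
  have hq0 : 0 < q := by omega
  have hQ : q^2 = q*q := sq q
  have hQ4 : 4 ≤ q*q := Nat.mul_le_mul hq2 hq2
  have hab : q * (i / q) + i % q = i := Nat.div_add_mod i q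
  have hb : i % q < q := Nat.mod_lt i hq0
  have ha : i / q < q := Nat.div_lt_of_lt_mul (by omega)
  obtain ⟨a, hadef⟩ : ∃ a, i / q = a := ⟨_, rfl⟩
  obtain ⟨b, hbdef⟩ : ∃ b, i % q = b := ⟨_, rfl⟩
  rw [hadef] at hab ha ⊢
  rw [hbdef] at hab hb ⊢
  have hcle : b*q + a + 1 ≤ q^2 := by
    have h1 : (b+1)*q ≤ q*q := Nat.mul_le_mul_right q hb
    have h2 : (b+1)*q = b*q + q := by ring
    omega
  have hc0 : b*q + a = 0 → i = 0 := by
    intro h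
    have ha0 : a = 0 := by omega
    have hb0 : b = 0 := by
      have hbq : b*q = 0 := by omega
      rcases Nat.mul_eq_zero.mp hbq with h' | h'
      · exact h'
      · omega
    rw [ha0, hb0, Nat.mul_zero, Nat.add_zero] at hab
    omega
  have hkeyid : i + q*(q^2 - 1 - (b*q + a)) = (q - b)*(q^2-1) := by
    have hiz : (i:ℤ) = (q:ℤ)*(a:ℤ) + (b:ℤ) := by exact_mod_cast hab.symm
    zify [show b ≤ q by omega, show b*q + a ≤ q^2 - 1 by omega, show 1 ≤ q^2 by omega]
    rw [hiz]
    ring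
  constructor
  · rintro ⟨j, hjr, hne, hdvd⟩
    rw [mem_range] at hjr
    rcases Nat.eq_zero_or_pos i with rfl | hipos
    · right
      refine ⟨rfl, ?_⟩
      have hdj : (q^2 - 1) ∣ j := by
        apply (nat_coprime q (by omega)).dvd_of_dvd_mul_right
        simpa [mul_comm] using hdvd
      have hjne : j ≠ 0 := by
        rintro rfl
        simp at hne
      exact le_trans (Nat.le_of_dvd (by omega) hdj) (by omega)
    · left
      refine ⟨by omega, ?_⟩
      by_contra hcon
      push_neg at hcon
      obtain ⟨j0, hj0⟩ : ∃ j0, q^2 - 1 - (b*q + a) = j0 := ⟨_, rfl⟩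
      rw [hj0] at hcon hkeyid
      have hjlt : j < j0 := by omega
      have hdvd0 : (q^2-1) ∣ (i + q*j0) := by
        rw [hkeyid]
        exact Dvd.dvd.mul_left (dvd_refl _) _
      have hms : q*(j0 - j) + q*j = q*j0 := by
        rw [← Nat.mul_add]
        congr 1
        omega
      have hsub : (i + q*j0) - (i + q*j) = q*(j0 - j) := by omega
      have hdvdd : (q^2-1) ∣ q*(j0 - j) := hsub ▸ Nat.dvd_sub hdvd0 hdvd
      have hdj : (q^2-1) ∣ (j0 - j) := by
        apply (nat_coprime q (by omega)).dvd_of_dvd_mul_right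
        simpa [mul_comm] using hdvdd
      have hle : q^2 - 1 ≤ j0 - j := Nat.le_of_dvd (by omega) hdj
      have hz : b*q + a = 0 := by omega
      exact absurd (hc0 hz) (by omega)
  · rintro (⟨hine, hle⟩ | ⟨rfl, hle⟩)
    · refine ⟨q^2 - 1 - (b*q + a), mem_range.mpr (by omega), by omega, ?_⟩
      rw [hkeyid]
      exact Dvd.dvd.mul_left (dvd_refl _) _
    · refine ⟨q^2 - 1, mem_range.mpr (by omega), ?_, ?_⟩
      · have h3 : q * (q^2-1) ≠ 0 := Nat.mul_ne_zero (by omega) (by omega)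
        omega
      · simpa using Dvd.dvd.mul_left (dvd_refl (q^2-1)) q

theorem Tset_eq (q m t r : ℕ) (hq2 : 2 ≤ q) (hm : m = q*t + r) (ht : 1 ≤ t)
    (hr' : r + 1 ≤ q) (hmq : m < q^2) (htr' : q ≤ t + r + 1) :
    Tset q m = ((Finset.range (t+1) ×ˢ Finset.range (q-t-1)) ∪
        (Finset.range (q-r-1) ×ˢ {q-t-1})).image (fun ab => ab.1 * q + ab.2) := by
  have hq0 : 0 < q := by omega
  have hQ : q^2 = q*q := sq q
  have hQ4 : 4 ≤ q*q := Nat.mul_le_mul hq2 hq2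
  have ht' : t + 1 ≤ q := by
    by_contra hc
    push_neg at hc
    have h1 : q*q ≤ q*t := Nat.mul_le_mul_left q (by omega)
    omega
  have hqt : q*t = t*q := by ring
  ext i
  simp only [Tset, mem_sdiff, mem_range, Sset, mem_filter, mem_image, mem_union,
    mem_product, mem_range, mem_singleton]
  constructor
  · rintro ⟨him, hnot⟩
    have hnp : ¬ (∃ j ∈ Finset.range (m+1), i + q*j ≠ 0 ∧ (q^2-1) ∣ (i + q*j)) := by
      intro hP
      exact hnot ⟨him, by simpa using hP⟩
    rw [exists_iff q m i hq2 hmq (by omega)] at hnp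
    push_neg at hnp
    obtain ⟨hn1, hn2⟩ := hnp
    have hab : q * (i / q) + i % q = i := Nat.div_add_mod i q
    have hb : i % q < q := Nat.mod_lt i hq0
    have ha : i / q < q := Nat.div_lt_of_lt_mul (by omega)
    obtain ⟨a, hadef⟩ : ∃ a, i / q = a := ⟨_, rfl⟩
    obtain ⟨b, hbdef⟩ : ∃ b, i % q = b := ⟨_, rfl⟩
    rw [hadef] at hab ha
    rw [hbdef] at hab hb
    rw [hadef, hbdef] at hn1
    have haq : a*q = q*a := by ring
    refine ⟨(a, b), ?_, by simp only; omega⟩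
    simp only
    rcases Nat.eq_zero_or_pos i with rfl | hipos
    · have hqa0 : q*a = 0 := by omega
      have hb0 : b = 0 := by omega
      have ha0 : a = 0 := by
        rcases Nat.mul_eq_zero.mp hqa0 with h' | h'
        · omega
        · exact h'
      have hm2 : m + 2 ≤ q^2 := by
        have := hn2 rfl
        omega
      rcases Nat.lt_or_ge (t+1) q with hlt | hge
      · left; constructor <;> omega
      · have hteq : t + 1 = q := by omega
        have hmul : q*(t+1) = q*q := by rw [hteq]
        have hexp : q*(t+1) = q*t + q := by ring
        right
        constructor <;> omega
    · have hbig := hn1 (by omega)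
      have hcle : b*q + a + 1 ≤ q^2 := by
        have h1 : (b+1)*q ≤ q*q := Nat.mul_le_mul_right q hb
        have h2 : (b+1)*q = b*q + q := by ring
        omega
      have hN1 : b + t + 1 ≤ q := by
        by_contra hc
        push_neg at hc
        have h1 : q*q ≤ (b+t)*q := Nat.mul_le_mul_right q (by omega)
        have h2 : (b+t)*q = b*q + t*q := by ring
        omega
      rcases Nat.lt_or_ge (b + t + 1) q with hlt | hge
      · left
        have haT : a < t + 1 := by
          by_contra hc
          push_neg at hc
          have h1 : q*(t+1) ≤ q*a := Nat.mul_le_mul_left q (by omega)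
          have h2 : q*(t+1) = q*t + q := by ring
          omega
        exact ⟨haT, by omega⟩
      · have hbt : b + t + 1 = q := by omega
        right
        have h5 : (b+t+1)*q = q*q := by rw [hbt]
        have h4 : (b+t+1)*q = b*q + t*q + q := by ring
        constructor <;> omega
  · rintro ⟨⟨a, b⟩, hmem, rfl⟩
    dsimp only
    simp only at hmem
    have hblt : b < q := by rcases hmem with ⟨_, h⟩ | ⟨_, h⟩ <;> omega
    have hmod : (a*q + b) % q = b := by
      rw [add_comm, Nat.add_mul_mod_self_right, Nat.mod_eq_of_lt hblt]
    have hdiv : (a*q + b) / q = a := by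
      rw [add_comm, Nat.add_mul_div_right _ _ hq0, Nat.div_eq_of_lt hblt, Nat.zero_add]
    have haq : a*q = q*a := by ring
    have hile : a*q + b ≤ m := by
      rcases hmem with ⟨ha1, hb1⟩ | ⟨ha1, hb1⟩
      · have h1 : a*q ≤ t*q := Nat.mul_le_mul_right q (by omega)
        omega
      · have h1 : (a+1)*q ≤ t*q := Nat.mul_le_mul_right q (by omega)
        have h2 : (a+1)*q = a*q + q := by ring
        omega
    refine ⟨by omega, ?_⟩
    rintro ⟨-, hP⟩
    obtain ⟨j, hj, hP1, hP2⟩ := hP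
    have hP : (a*q+b ≠ 0 ∧ q^2 - 1 - (((a*q+b) % q)*q + (a*q+b) / q) ≤ m)
        ∨ (a*q+b = 0 ∧ q^2 - 1 ≤ m) :=
      (exists_iff q m (a*q+b) hq2 hmq hile).mp ⟨j, mem_range.mpr hj, hP1, hP2⟩
    rw [hmod, hdiv] at hP
    rcases hP with ⟨hne, hle⟩ | ⟨heq, hle⟩
    · have hcle : b*q + a + 1 ≤ q^2 := by
        have h1 : (b+1)*q ≤ q*q := Nat.mul_le_mul_right q hblt
        have h2 : (b+1)*q = b*q + q := by ring
        omega
      have hgood : m + (b*q + a) + 2 ≤ q^2 := by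
        rcases hmem with ⟨ha1, hb1⟩ | ⟨ha1, hb1⟩
        · have h1 : (b+t+2)*q ≤ q*q := Nat.mul_le_mul_right q (by omega)
          have h2 : (b+t+2)*q = b*q + t*q + 2*q := by ring
          omega
        · have hbt : b + t + 1 = q := by omega
          have h5 : (b+t+1)*q = q*q := by rw [hbt]
          have h4 : (b+t+1)*q = b*q + t*q + q := by ring
          omega
      omega
    · have hgood : m + 2 ≤ q^2 := by
        rcases hmem with ⟨ha1, hb1⟩ | ⟨ha1, hb1⟩
        · have h1 : q*(t+1) ≤ q*(q-1) := Nat.mul_le_mul_left q (by omega)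
          have h2 : q*(t+1) = q*t + q := by ring
          have h3 : q*(q-1) + q = q*q := by
            have h6 : q*(q-1) + q = q*(q-1+1) := by ring
            rw [h6]
            congr 1
            omega
          omega
        · have h1 : q*(t+1) ≤ q*q := Nat.mul_le_mul_left q (by omega)
          have h2 : q*(t+1) = q*t + q := by ring
          omega
      omega

theorem count (q m t r : ℕ) (hq2 : 2 ≤ q) (hm : m = q*t+r) (ht : 1 ≤ t) (hr : r ≤ q-1)
    (hmq : m < q^2) (htr : q-r-1 ≤ t) :
    (Tset q m).card = (q-t-1)*(t+1) + (q-r-1) := by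
  have hr' : r + 1 ≤ q := by omega
  have htr' : q ≤ t + r + 1 := by omega
  rw [Tset_eq q m t r hq2 hm ht hr' hmq htr']
  rw [Finset.card_image_of_injOn, Finset.card_union_of_disjoint]
  · rw [Finset.card_product, Finset.card_product, Finset.card_range, Finset.card_range,
      Finset.card_range, Finset.card_singleton, Nat.mul_one, Nat.mul_comm]
  · rw [Finset.disjoint_left]
    rintro ⟨a, b⟩ hA hB
    simp only [mem_product, mem_range, mem_singleton] at hA hB
    omega
  · rintro ⟨a1, b1⟩ h1 ⟨a2, b2⟩ h2 heq
    simp only [Finset.coe_union, Finset.coe_product, Set.mem_union, Set.mem_prod,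
      Finset.mem_coe, mem_range, mem_singleton, Finset.coe_singleton,
      Set.mem_singleton_iff] at h1 h2
    have hb1 : b1 < q := by rcases h1 with ⟨_, h⟩ | ⟨_, h⟩ <;> omega
    have hb2 : b2 < q := by rcases h2 with ⟨_, h⟩ | ⟨_, h⟩ <;> omega
    simp only at heq
    have e1 : (a1*q + b1) % q = b1 := by
      rw [add_comm, Nat.add_mul_mod_self_right, Nat.mod_eq_of_lt hb1]
    have e2 : (a1*q + b1) / q = a1 := by
      rw [add_comm, Nat.add_mul_div_right _ _ (by omega), Nat.div_eq_of_lt hb1, Nat.zero_add]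
    have e3 : (a2*q + b2) % q = b2 := by
      rw [add_comm, Nat.add_mul_mod_self_right, Nat.mod_eq_of_lt hb2]
    have e4 : (a2*q + b2) / q = a2 := by
      rw [add_comm, Nat.add_mul_div_right _ _ (by omega), Nat.div_eq_of_lt hb2, Nat.zero_add]
    have ea : a1 = a2 := by rw [← e2, ← e4, heq]
    have eb : b1 = b2 := by rw [← e1, ← e3, heq]
    simp_all

section main
variable {F : Type} [Field F] [Fintype F]
variable (p s q m : ℕ) [Fact p.Prime] [CharP F p]

theorem frob_sum (hq : q = p ^ s) (c : ℕ → F) (a : F) :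
    (∑ i ∈ range (m+1), c i * a ^ i) ^ q
      = ∑ i ∈ range (m+1), (c i) ^ q * a ^ (q*i) := by
  have h1 : (∑ i ∈ range (m+1), c i * a ^ i) ^ q
      = iterateFrobenius F p s (∑ i ∈ range (m+1), c i * a ^ i) := by
    rw [iterateFrobenius_def, hq]
  rw [h1, map_sum]
  refine Finset.sum_congr rfl fun i _ => ?_
  rw [map_mul, iterateFrobenius_def, iterateFrobenius_def, ← hq, ← pow_mul, mul_comm i q]

/-- key pairing computation : `⟨eval f, x^j⟩_h` -/
theorem pair_eval (hq : q = p ^ s) (hcard : Fintype.card F = q^2)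
    (f : Polynomial F) (hf : f.natDegree ≤ m) (j : ℕ) :
    ∑ a : F, (f.eval a) * ((a ^ j) ^ q)
      = ∑ i ∈ range (m+1), f.coeff i *
          (if i + q*j ≠ 0 ∧ (q^2 - 1) ∣ (i + q*j) then (-1 : F) else 0) := by
  have h1 : ∀ a : F, (f.eval a) * ((a ^ j) ^ q)
      = ∑ i ∈ range (m+1), f.coeff i * a ^ (i + q*j) := by
    intro a
    rw [eval_split m f hf a, Finset.sum_mul]
    refine Finset.sum_congr rfl fun i _ => ?_
    rw [← pow_mul, mul_comm j q, pow_add, mul_assoc]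
  simp_rw [h1]
  rw [Finset.sum_comm]
  refine Finset.sum_congr rfl fun i _ => ?_
  rw [← Finset.mul_sum, sum_pow_eval, hcard]

/-- key pairing computation : `⟨x^e, eval f⟩_h` -/
theorem pair_mono (hq : q = p ^ s) (hcard : Fintype.card F = q^2)
    (f : Polynomial F) (hf : f.natDegree ≤ m) (e : ℕ) :
    ∑ a : F, (a ^ e) * ((f.eval a) ^ q)
      = ∑ i ∈ range (m+1), ((f.coeff i) ^ q) *
          (if e + q*i ≠ 0 ∧ (q^2 - 1) ∣ (e + q*i) then (-1 : F) else 0) := by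
  have h1 : ∀ a : F, (a ^ e) * ((f.eval a) ^ q)
      = ∑ i ∈ range (m+1), (f.coeff i) ^ q * a ^ (e + q*i) := by
    intro a
    rw [eval_split m f hf a, frob_sum p s q m hq, Finset.mul_sum]
    refine Finset.sum_congr rfl fun i _ => ?_
    rw [pow_add]; ring
  simp_rw [h1]
  rw [Finset.sum_comm]
  refine Finset.sum_congr rfl fun i _ => ?_
  rw [← Finset.mul_sum, sum_pow_eval, hcard]

theorem span_inter (hq : q = p ^ s) (hq2 : 2 ≤ q) (hcard : Fintype.card F = q^2)
    (hmq : m < q^2) :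
    Submodule.span F (RScode F m ∩ hermDualF q (RScode F m))
      = Submodule.span F (mono F '' ↑(Tset q m)) := by
  apply le_antisymm
  · rw [Submodule.span_le]
    rintro w ⟨⟨f, hfdeg, hwf⟩, hdual⟩
    have hkey : ∀ j ∈ range (m+1), ∑ i ∈ range (m+1), f.coeff i *
        (if i + q*j ≠ 0 ∧ (q^2 - 1) ∣ (i + q*j) then (-1 : F) else 0) = 0 := by
      intro j hj
      rw [mem_range] at hj
      rw [← pair_eval p s q m hq hcard f hfdeg j]
      have h2 := hdual (mono F j) (mono_mem_RS m j (by omega))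
      calc ∑ a : F, (f.eval a) * ((a ^ j) ^ q)
          = ∑ a : F, w a * ((mono F j a) ^ q) := by
            refine Finset.sum_congr rfl fun a _ => ?_
            rw [hwf a]; rfl
        _ = 0 := h2
    have hc := coeffs_vanish q m hq2 hmq f.coeff hkey
    have hw : w = ∑ i ∈ Tset q m, f.coeff i • mono F i := by
      have h1 : w = ∑ i ∈ range (m+1), f.coeff i • mono F i := by
        funext a
        rw [hwf a, eval_split m f hfdeg a, Finset.sum_apply]
        exact Finset.sum_congr rfl fun i _ => rfl
      rw [h1]
      symm
      apply Finset.sum_subset Finset.sdiff_subset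
      intro x hx hnx
      have hxS : x ∈ Sset q m := by
        simp only [Tset, mem_sdiff] at hnx
        by_contra hS
        exact hnx ⟨hx, hS⟩
      rw [hc x hxS, zero_smul]
    rw [hw]
    exact Submodule.sum_mem _ fun i hi =>
      Submodule.smul_mem _ _ (Submodule.subset_span ⟨i, by exact_mod_cast hi, rfl⟩)
  · rw [Submodule.span_le]
    rintro w ⟨e, he, rfl⟩
    have heT : e ∈ Tset q m := by exact_mod_cast he
    simp only [Tset, mem_sdiff, mem_range] at heT
    obtain ⟨hem, heS⟩ := heT
    apply Submodule.subset_span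
    refine ⟨mono_mem_RS m e (by omega), ?_⟩
    intro cc hcc
    obtain ⟨f, hfdeg, hcf⟩ := hcc
    calc ∑ a : F, mono F e a * (cc a) ^ q
        = ∑ a : F, (a ^ e) * ((f.eval a) ^ q) := by
          refine Finset.sum_congr rfl fun a _ => ?_
          rw [hcf a]; rfl
      _ = ∑ i ∈ range (m+1), ((f.coeff i) ^ q) *
          (if e + q*i ≠ 0 ∧ (q^2 - 1) ∣ (e + q*i) then (-1 : F) else 0) :=
          pair_mono p s q m hq hcard f hfdeg e
      _ = 0 := by
          apply Finset.sum_eq_zero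
          intro i hi
          rw [if_neg, mul_zero]
          rintro ⟨h1, h2⟩
          exact heS (by simp only [Sset, mem_filter]; exact
            ⟨mem_range.mpr (by omega), i, hi, h1, h2⟩)

end main

/-- with `m = qt + r`, `t ≥ 1`, `0 ≤ r ≤ q-1`, `m < q²` and `t ≥ q - r - 1`,
the code `C` over `F_{q²}` of length `q²` spanned by the evaluations of `1, x, ..., x^m` at
all elements of `F_{q²}` satisfies `dim(C ∩ C^{⊥_h}) = (q-t-1)(t+1) + q - r - 1`. -/
theorem herm_hull_dim_large_t
    {F : Type} [Field F] [Fintype F] (p s q : ℕ) [Fact p.Prime] [CharP F p]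
    (hq : q = p ^ s) (hs : 0 < s) (hcard : Fintype.card F = q ^ 2)
    (m t r : ℕ) (hm : m = q * t + r) (ht : 1 ≤ t) (hr : r ≤ q - 1)
    (hmq : m < q ^ 2) (htr : q - r - 1 ≤ t) :
    Module.finrank F
        (Submodule.span F (RScode F m ∩ hermDualF q (RScode F m)))
      = (q - t - 1) * (t + 1) + (q - r - 1) := by
  classical
  have hp2 : 2 ≤ p := (Fact.out (p := p.Prime)).two_le
  have hq2 : 2 ≤ q := by
    have h1 : 2^1 ≤ p^s := Nat.pow_le_pow_left hp2 1 |>.trans (Nat.pow_le_pow_right (by omega) hs)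
    simpa [hq] using h1
  rw [span_inter p s q m hq hq2 hcard hmq]
  have hsub : ∀ e ∈ Tset q m, e < Fintype.card F := by
    intro e he
    simp only [Tset, mem_sdiff, mem_range] at he
    omega
  have hli : LinearIndependent F (fun e : (Tset q m : Finset ℕ) => mono F (e : ℕ)) := by
    have h := (mono_li (F := F)).comp
      (fun e : (Tset q m : Finset ℕ) => (⟨(e : ℕ), hsub e e.2⟩ : Fin (Fintype.card F)))
      (fun e e' hee => Subtype.ext (by simpa using congrArg Fin.val hee))
    exact h
  have himg : mono F '' ↑(Tset q m)
      = Set.range (fun e : (Tset q m : Finset ℕ) => mono F (e : ℕ)) :=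
    Set.image_eq_range _ _
  rw [himg, finrank_span_eq_card hli, Fintype.card_coe]
  exact count q m t r hq2 hm ht hr hmq htr
end

section
/- Let q be a prime power and write m = qt + r with t ≥ 1, 0 ≤ r ≤ q-1, m < q^2, and t < q - r - 1. For the code C over F_{q^2} of length q^2 spanned by evaluations of 1, x, ..., x^m at all elements of F_{q^2}, one has dim(C ∩ C^{⊥_h}) = (q-t)t + r + 1. -/
open scoped BigOperators

open Finset Polynomial

section Arith
variable {q t r m : ℕ}

lemma arith_A (hq2 : 2 ≤ q) (ht : 1 ≤ t) (htr : t + r + 2 ≤ q) (hm : m = q*t + r)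
    {a b : ℕ} (ha : a < t) (hb1 : q - t ≤ b) (hb2 : b < q) :
    (q-1-b)*q + (q-1-a) ≤ m ∧ 1 ≤ a*q + b ∧ a*q + b ≤ m ∧
    (q-1-b)*q + (q-1-a) + (a + b*q) + 1 = q*q ∧
    0 < a + b*q ∧ a + b*q < q*q ∧ m + (a + b*q) + 1 < 2*(q*q) - 1 := by
  set c := q - 1 - b with hc
  set d := q - 1 - a with hd
  have hbc : b + c + 1 = q := by omega
  have had : a + d + 1 = q := by omega
  have p1 : b*q + c*q + q = q*q := by
    have := congrArg (· * q) hbc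
    simpa [add_mul, one_mul] using this
  have p3 : (t-1)*q + q = t*q := by
    have h : t - 1 + 1 = t := by omega
    calc (t-1)*q + q = ((t-1)+1)*q := by ring
      _ = t*q := by rw [h]
  have p2 : c*q ≤ (t-1)*q := Nat.mul_le_mul_right q (by omega)
  have p4 : q*t = t*q := Nat.mul_comm q t
  have p5 : 1*q ≤ b*q := Nat.mul_le_mul_right q (by omega)
  have p2' : a*q ≤ (t-1)*q := Nat.mul_le_mul_right q (by omega)
  have p6 : b*q ≤ (q-1)*q := Nat.mul_le_mul_right q (by omega)
  have p7 : (q-1)*q + q = q*q := by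
    have h : q - 1 + 1 = q := by omega
    calc (q-1)*q + q = ((q-1)+1)*q := by ring
      _ = q*q := by rw [h]
  have p8 : q*(t+2) ≤ q*q := Nat.mul_le_mul_left q (by omega)
  have p9 : q*(t+2) = q*t + 2*q := by ring
  omega

lemma arith_C (hq1 : 1 ≤ q) (j a b : ℕ) (hj : j = a*q + b) :
    q*j = a*(q*q-1) + (a + b*q) := by
  have h1 : a*(q*q-1) + a = a*(q*q) := by
    have h : q*q - 1 + 1 = q*q := by
      have : 1 ≤ q*q := Nat.one_le_iff_ne_zero.mpr (by positivity)
      omega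
    calc a*(q*q-1) + a = a*((q*q-1)+1) := by ring
      _ = a*(q*q) := by rw [h]
  have h2 : q*j = a*(q*q) + b*q := by rw [hj]; ring
  omega

lemma arith_B (hq2 : 2 ≤ q) (ht : 1 ≤ t) (htr : t + r + 2 ≤ q) (hm : m = q*t + r)
    {i j a b : ℕ} (hi : i ≤ m) (hj : j ≤ m) (hjab : j = a*q + b) (hb : b < q)
    (hK : i + (a + b*q) + 1 = q*q) :
    a < t ∧ q - t ≤ b ∧ b < q ∧ i = (q-1-b)*q + (q-1-a) := by
  have p4 : q*t = t*q := Nat.mul_comm q t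
  have ha : a ≤ t := by
    by_contra h
    push_neg at h
    have h1 : (t+1)*q ≤ a*q := Nat.mul_le_mul_right q h
    have h2 : (t+1)*q = t*q + q := by ring
    omega
  have halt : a < t := by
    rcases Nat.lt_or_ge a t with h|h
    · exact h
    · exfalso
      have ha' : a = t := by omega
      have hbr : b ≤ r := by
        rw [hjab, ha'] at hj
        omega
      have h1 : b*q ≤ r*q := Nat.mul_le_mul_right q hbr
      have p8 : q*(t+r+2) ≤ q*q := Nat.mul_le_mul_left q htr
      have p9 : q*(t+r+2) = q*t + q*r + 2*q := by ring
      have p10 : q*r = r*q := Nat.mul_comm q r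
      omega
  obtain ⟨d, hd⟩ : ∃ d, b + d = q := ⟨q - b, by omega⟩
  have hd1 : 1 ≤ d := by omega
  have hsum : b*q + d*q = q*q := by
    have := congrArg (· * q) hd
    simpa [add_mul] using this
  have hdt : d ≤ t := by
    by_contra h
    push_neg at h
    have h1 : (t+1)*q ≤ d*q := Nat.mul_le_mul_right q h
    have h2 : (t+1)*q = t*q + q := by ring
    omega
  refine ⟨halt, by omega, hb, ?_⟩
  have hcb : q - 1 - b = d - 1 := by omega
  have hX : (q-1-b)*q = (d-1)*q := by rw [hcb]
  have hd2 : (d-1)*q + q = d*q := by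
    have h : d - 1 + 1 = d := by omega
    calc (d-1)*q + q = ((d-1)+1)*q := by ring
      _ = d*q := by rw [h]
  omega

lemma arith_D (hq2 : 2 ≤ q) (ht : 1 ≤ t) (htr : t + r + 2 ≤ q) (hm : m = q*t + r)
    {i j a b : ℕ} (hi : i ≤ m) (hj : j ≤ m) (hjab : j = a*q + b) (hb : b < q)
    (hne : ¬(i = 0 ∧ j = 0)) :
    0 < i + (a + b*q) ∧ i + (a + b*q) < 2*(q*q-1) := by
  have p4 : q*t = t*q := Nat.mul_comm q t
  have ha : a ≤ t := by
    by_contra h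
    push_neg at h
    have h1 : (t+1)*q ≤ a*q := Nat.mul_le_mul_right q h
    have h2 : (t+1)*q = t*q + q := by ring
    omega
  have p6 : b*q ≤ (q-1)*q := Nat.mul_le_mul_right q (by omega)
  have p7 : (q-1)*q + q = q*q := by
    have h : q - 1 + 1 = q := by omega
    calc (q-1)*q + q = ((q-1)+1)*q := by ring
      _ = q*q := by rw [h]
  have p8 : q*(t+2) ≤ q*q := Nat.mul_le_mul_left q (by omega)
  have p9 : q*(t+2) = q*t + 2*q := by ring
  have hpos : 0 < i + (a + b*q) := by
    rcases Nat.eq_zero_or_pos i with hi0|hi0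
    swap
    · omega
    rcases Nat.eq_zero_or_pos b with hb0|hb0
    swap
    · have : 1*q ≤ b*q := Nat.mul_le_mul_right q hb0
      omega
    rcases Nat.eq_zero_or_pos a with ha0|ha0
    swap
    · omega
    subst ha0; subst hb0; subst hi0
    simp at hjab
    exact absurd ⟨rfl, hjab⟩ hne
  refine ⟨hpos, ?_⟩
  omega

lemma arith_mB (ht : 1 ≤ t) (htr : t + r + 2 ≤ q) (hm : m = q*t + r) :
    m + q + 1 ≤ q*q := by
  have p8 : q*(t+2) ≤ q*q := Nat.mul_le_mul_left q (by omega)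
  have p9 : q*(t+2) = q*t + 2*q := by ring
  omega

lemma good_card (hq2 : 2 ≤ q) (ht : 1 ≤ t) (htr : t + r + 2 ≤ q) (hm : m = q*t + r) :
    ((Finset.range (m+1)).filter (fun i =>
      i ∉ ((Finset.range t) ×ˢ (Finset.Ico (q-t) q)).image
        (fun ab => (q-1-ab.2)*q + (q-1-ab.1)))).card = (q-t)*t + r + 1 := by
  classical
  set B := ((Finset.range t) ×ˢ (Finset.Ico (q-t) q)).image
      (fun ab : ℕ × ℕ => (q-1-ab.2)*q + (q-1-ab.1)) with hB
  have hsub : B ⊆ Finset.range (m+1) := by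
    intro i hi
    obtain ⟨⟨a,b⟩, hab, rfl⟩ := Finset.mem_image.mp hi
    simp only [Finset.mem_product, Finset.mem_range, Finset.mem_Ico] at hab
    exact Finset.mem_range.mpr
      (show (q-1-b)*q + (q-1-a) < m+1 from
        by have := (arith_A hq2 ht htr hm hab.1 hab.2.1 hab.2.2).1; omega)
  have hinj : Set.InjOn (fun ab : ℕ×ℕ => (q-1-ab.2)*q + (q-1-ab.1))
      ↑((Finset.range t) ×ˢ (Finset.Ico (q-t) q)) := by
    rintro ⟨a,b⟩ hab ⟨a',b'⟩ hab' heq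
    simp only [Finset.coe_product, Set.mem_prod, Finset.mem_coe, Finset.mem_range,
      Finset.mem_Ico] at hab hab'
    simp only at heq
    have hq0 : 0 < q := by omega
    have h1 : ∀ x y : ℕ, y < q → ((x*q + y) / q) = x := by
      intro x y hy
      rw [Nat.add_comm, Nat.add_mul_div_right y x hq0, Nat.div_eq_of_lt hy, Nat.zero_add]
    have e1 := congrArg (· / q) heq
    rw [h1 _ _ (by omega), h1 _ _ (by omega)] at e1
    have hbb : b = b' := by omega
    subst hbb
    have hX : (q-1-b)*q = (q-1-b)*q := rfl
    have haa : a = a' := by omega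
    simp [haa]
  have hcardB : B.card = t*t := by
    rw [hB, Finset.card_image_of_injOn hinj, Finset.card_product, Finset.card_range,
      Nat.card_Ico]
    congr 1
    omega
  have hflt : (Finset.range (m+1)).filter (fun i => i ∉ B) = Finset.range (m+1) \ B := by
    ext i
    simp [Finset.mem_sdiff, Finset.mem_filter]
  rw [hflt, Finset.card_sdiff_of_subset hsub, Finset.card_range, hcardB]
  have h1 : (q-t)*t + t*t = q*t := by
    calc (q-t)*t + t*t = ((q-t)+t)*t := by ring
      _ = q*t := by rw [show q-t+t = q from by omega]
  have h2 : t*t ≤ q*t := Nat.mul_le_mul_right t (by omega)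
  omega

end Arith

section Field
variable {F : Type} [Field F] [Fintype F]

lemma sum_pow_not_dvd {k : ℕ} (h : ¬ (Fintype.card F - 1) ∣ k) :
    ∑ a : F, a ^ k = 0 := by
  have h1 : 1 < Fintype.card F := Fintype.one_lt_card
  have hk0 : k % (Fintype.card F - 1) ≠ 0 := fun h0 => h (Nat.dvd_of_mod_eq_zero h0)
  have hkne : k ≠ 0 := by rintro rfl; exact h (dvd_zero _)
  have key : ∀ a : F, a ^ k = a ^ (k % (Fintype.card F - 1)) := by
    intro a
    by_cases ha : a = 0
    · subst ha; rw [zero_pow hkne, zero_pow hk0]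
    · conv_lhs => rw [← Nat.div_add_mod k (Fintype.card F - 1)]
      rw [pow_add, pow_mul, FiniteField.pow_card_sub_one_eq_one a ha, one_pow, one_mul]
  simp_rw [key]
  exact FiniteField.sum_pow_lt_card_sub_one F _ (Nat.mod_lt _ (by omega))

lemma sum_pow_dvd {k : ℕ} (hk : k ≠ 0) (h : (Fintype.card F - 1) ∣ k) :
    ∑ a : F, a ^ k = -1 := by
  have h1 : 1 < Fintype.card F := Fintype.one_lt_card
  classical
  have key : ∀ a : F, a ^ k = 1 - (if a = 0 then 1 else 0) := by
    intro a
    by_cases ha : a = 0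
    · simp [ha, zero_pow hk]
    · obtain ⟨c, rfl⟩ := h
      rw [pow_mul, FiniteField.pow_card_sub_one_eq_one a ha, one_pow]
      simp [ha]
  simp_rw [key]
  rw [Finset.sum_sub_distrib, Finset.sum_ite_eq' univ (0 : F) (fun _ => (1:F)),
    if_pos (mem_univ _), Finset.sum_const, card_univ, nsmul_eq_mul, mul_one,
    FiniteField.cast_card_eq_zero, zero_sub]

lemma only_multiple {N K : ℕ} (hdvd : N ∣ K) (h0 : 0 < K) (h2 : K < 2 * N) : K = N := by
  obtain ⟨k, rfl⟩ := hdvd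
  have hN : 0 < N := by
    rcases Nat.eq_zero_or_pos N with h|h
    · subst h; simp at h0
    · exact h
  have hk1 : k = 1 := by
    by_contra h
    rcases Nat.lt_or_ge k 2 with hlt|hge
    · interval_cases k <;> simp_all
    · have : N * 2 ≤ N * k := Nat.mul_le_mul_left N hge
      omega
  simp [hk1]

lemma mem_hermDual_iff {p s q : ℕ} [Fact p.Prime] [CharP F p] (hq : q = p ^ s)
    (m : ℕ) (x : F → F) :
    x ∈ hermDualF q (RScode F m) ↔ ∀ j ≤ m, ∑ a : F, x a * a ^ (q * j) = 0 := by
  constructor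
  · intro hx j hj
    have := hx (fun a => a ^ j) ⟨X ^ j, by simpa using hj, fun a => by simp⟩
    simpa [← pow_mul, mul_comm j q] using this
  · rintro hx c ⟨f, hf, hfc⟩
    have key : ∀ a : F, (c a) ^ q = ∑ j ∈ range (m+1), f.coeff j ^ q * a ^ (q * j) := by
      intro a
      rw [hfc a, eval_eq_sum_range' (Nat.lt_succ_of_le hf), hq, sum_pow_char_pow]
      exact Finset.sum_congr rfl fun j _ => by rw [mul_pow, ← pow_mul, ← hq, mul_comm j q]
    calc ∑ a : F, x a * (c a) ^ q
        = ∑ a : F, ∑ j ∈ range (m+1), f.coeff j ^ q * (x a * a ^ (q * j)) := by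
          refine Finset.sum_congr rfl fun a _ => ?_
          rw [key a, Finset.mul_sum]
          exact Finset.sum_congr rfl fun j _ => by ring
      _ = ∑ j ∈ range (m+1), f.coeff j ^ q * ∑ a : F, x a * a ^ (q * j) := by
          rw [Finset.sum_comm]
          exact Finset.sum_congr rfl fun j _ => by rw [Finset.mul_sum]
      _ = 0 := by
          refine Finset.sum_eq_zero fun j hj => ?_
          rw [hx j (by simpa using Nat.lt_succ_iff.mp (mem_range.mp hj)), mul_zero]

lemma linearIndependent_ev :
    LinearIndependent F (fun i : Fin (Fintype.card F) => (fun a : F => a ^ (i : ℕ))) := by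
  rw [Fintype.linearIndependent_iff]
  intro g hg i
  classical
  set f : Polynomial F := ∑ j : Fin (Fintype.card F), C (g j) * X ^ (j : ℕ) with hfdef
  have hdeg : f.natDegree < Fintype.card F := by
    have h1 : 0 < Fintype.card F := Fintype.card_pos
    refine Nat.lt_of_le_of_lt (Polynomial.natDegree_sum_le_of_forall_le _ _
      (fun j _ => ?_)) (Nat.sub_lt h1 one_pos)
    calc (C (g j) * X ^ (j:ℕ)).natDegree ≤ (X ^ (j:ℕ) : Polynomial F).natDegree :=
          natDegree_C_mul_le _ _
      _ ≤ Fintype.card F - 1 := by rw [natDegree_X_pow]; omega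
  have heval : ∀ a : F, f.eval a = 0 := by
    intro a
    have := congrFun hg a
    simpa [hfdef, eval_finset_sum, Finset.sum_apply] using this
  have hf0 : f = 0 :=
    Polynomial.eq_zero_of_natDegree_lt_card_of_eval_eq_zero f Function.injective_id
      (fun a => heval a) (by simpa using hdeg)
  have : f.coeff i = g i := by
    rw [hfdef, Polynomial.finset_sum_coeff]
    simp only [coeff_C_mul, coeff_X_pow, mul_ite, mul_one, mul_zero]
    rw [Finset.sum_eq_single i (fun j _ hji => by
      rw [if_neg (fun h => hji (Fin.ext h.symm))]) (by simp)]
    simp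
  rw [hf0] at this
  simpa using this.symm

variable {q t r m : ℕ}

lemma S_bad_ne (hF : Fintype.card F = q*q) (hq2 : 2 ≤ q) (ht : 1 ≤ t)
    (htr : t + r + 2 ≤ q) (hm : m = q*t+r) {a b : ℕ} (ha : a < t) (hb1 : q-t ≤ b)
    (hb2 : b < q) {i' : ℕ} (hi' : i' ≤ m) (hne : i' ≠ (q-1-b)*q + (q-1-a)) :
    ∑ x : F, x ^ (i' + q*(a*q+b)) = 0 := by
  apply sum_pow_not_dvd
  rw [hF]
  intro hdvd
  rw [arith_C (by omega) _ a b rfl] at hdvd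
  have h2 : (q*q-1) ∣ (i' + (a + b*q)) := by
    have hmul : (q*q-1) ∣ a*(q*q-1) := Dvd.intro_left a rfl
    have h3 := Nat.dvd_sub hdvd hmul
    have heq : i' + (a*(q*q-1) + (a+b*q)) - a*(q*q-1) = i' + (a+b*q) := by omega
    rwa [heq] at h3
  obtain ⟨_, _, _, hKey, hpos, hlt, hbound⟩ := arith_A hq2 ht htr hm ha hb1 hb2
  have hmult := only_multiple h2 (by omega) (by omega)
  omega

lemma S_bad_eq (hF : Fintype.card F = q*q) (hq2 : 2 ≤ q) (ht : 1 ≤ t)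
    (htr : t + r + 2 ≤ q) (hm : m = q*t+r) {a b : ℕ} (ha : a < t) (hb1 : q-t ≤ b)
    (hb2 : b < q) :
    ∑ x : F, x ^ ((q-1-b)*q + (q-1-a) + q*(a*q+b)) = -1 := by
  obtain ⟨_, _, _, hKey, hpos, hlt, hbound⟩ := arith_A hq2 ht htr hm ha hb1 hb2
  have hC := arith_C (q := q) (by omega) _ a b rfl
  apply sum_pow_dvd
  · omega
  · rw [hF]
    refine ⟨a+1, ?_⟩
    have hexp : (q*q-1)*(a+1) = a*(q*q-1) + (q*q-1) := by ring
    omega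

lemma S_good (hF : Fintype.card F = q*q) (hq2 : 2 ≤ q) (ht : 1 ≤ t)
    (htr : t + r + 2 ≤ q) (hm : m = q*t+r) {i j : ℕ} (hi : i ≤ m) (hj : j ≤ m)
    (hne : ¬(i = 0 ∧ j = 0))
    (hgood : ∀ a b : ℕ, a < t → q-t ≤ b → b < q → i ≠ (q-1-b)*q + (q-1-a)) :
    ∑ x : F, x ^ (i + q*j) = 0 := by
  apply sum_pow_not_dvd
  rw [hF]
  intro hdvd
  obtain ⟨a, b, hjab, hb⟩ : ∃ a b, j = a*q + b ∧ b < q :=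
    ⟨j / q, j % q, (Nat.div_add_mod' j q).symm, Nat.mod_lt _ (by omega)⟩
  rw [arith_C (by omega) _ a b hjab] at hdvd
  have h2 : (q*q-1) ∣ (i + (a + b*q)) := by
    have hmul : (q*q-1) ∣ a*(q*q-1) := Dvd.intro_left a rfl
    have h3 := Nat.dvd_sub hdvd hmul
    have heq : i + (a*(q*q-1) + (a+b*q)) - a*(q*q-1) = i + (a+b*q) := by omega
    rwa [heq] at h3
  obtain ⟨hpos, hlt⟩ := arith_D hq2 ht htr hm hi hj hjab hb hne
  have hmult := only_multiple h2 hpos (by omega)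
  have hK : i + (a + b*q) + 1 = q*q := by
    have : 1 ≤ q*q := Nat.one_le_iff_ne_zero.mpr (by positivity)
    omega
  obtain ⟨ha', hb1', hb2', hieq⟩ := arith_B hq2 ht htr hm hi hj hjab hb hK
  exact hgood a b ha' hb1' hb2' hieq

end Field

section Main
variable {F : Type} [Field F] [Fintype F]

/-- `RScode` as a submodule. -/
def RSsub (F : Type) [Field F] (m : ℕ) : Submodule F (F → F) where
  carrier := RScode F m
  add_mem' := by
    rintro x y ⟨f, hf, hxf⟩ ⟨g, hg, hyg⟩
    exact ⟨f + g, le_trans (Polynomial.natDegree_add_le f g) (max_le hf hg),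
      fun a => by simp [hxf a, hyg a]⟩
  zero_mem' := ⟨0, by simp⟩
  smul_mem' := by
    rintro c x ⟨f, hf, hxf⟩
    exact ⟨Polynomial.C c * f, le_trans (Polynomial.natDegree_mul_le)
      (by simp [Polynomial.natDegree_C, hf]), fun a => by simp [hxf a]⟩

/-- `hermDualF` as a submodule. -/
def hermSub (q : ℕ) (C : Set (F → F)) : Submodule F (F → F) where
  carrier := hermDualF q C
  add_mem' := by
    intro x y hx hy c hc
    simp only [Pi.add_apply, add_mul, Finset.sum_add_distrib, hx c hc, hy c hc, add_zero]
  zero_mem' := by intro c hc; simp [hermDualF]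
  smul_mem' := by
    intro r x hx c hc
    simp only [Pi.smul_apply, smul_eq_mul, mul_assoc, ← Finset.mul_sum, hx c hc, mul_zero]

/-- with `m = qt + r`, `t ≥ 1`, `0 ≤ r ≤ q-1`, `m < q²` and `t < q - r - 1`,
the code `C` over `F_{q²}` of length `q²` spanned by the evaluations of `1, x, ..., x^m` at
all elements of `F_{q²}` satisfies `dim(C ∩ C^{⊥_h}) = (q-t)t + r + 1`. -/
theorem herm_hull_dim_small_t
    {F : Type} [Field F] [Fintype F] (p s q : ℕ) [Fact p.Prime] [CharP F p]
    (hq : q = p ^ s) (hs : 0 < s) (hcard : Fintype.card F = q ^ 2)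
    (m t r : ℕ) (hm : m = q * t + r) (ht : 1 ≤ t) (hr : r ≤ q - 1)
    (hmq : m < q ^ 2) (htr : t < q - r - 1) :
    Module.finrank F
        (Submodule.span F (RScode F m ∩ hermDualF q (RScode F m)))
      = (q - t) * t + r + 1 := by
  classical
  have hq2 : 2 ≤ q := by
    have hp2 : 2 ≤ p := (Fact.out : p.Prime).two_le
    calc 2 ≤ p := hp2
      _ ≤ p ^ s := Nat.le_self_pow (by omega) p
      _ = q := hq.symm
  have htr' : t + r + 2 ≤ q := by omega
  have hF : Fintype.card F = q*q := by rw [hcard]; ring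
  have hm' : m = q * t + r := hm
  set e : ℕ → (F → F) := fun i a => a ^ i with he
  set badS : Finset ℕ := ((Finset.range t) ×ˢ (Finset.Ico (q-t) q)).image
      (fun ab => (q-1-ab.2)*q + (q-1-ab.1)) with hbadS
  set goodS : Finset ℕ := (Finset.range (m+1)).filter (fun i => i ∉ badS) with hgoodS
  have hsum : ∀ (f : Polynomial F), f.natDegree ≤ m → ∀ E : ℕ,
      ∑ a : F, f.eval a * a ^ E
        = ∑ i' ∈ Finset.range (m+1), f.coeff i' * ∑ x : F, x ^ (i' + E) := by
    intro f hf E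
    calc ∑ a : F, f.eval a * a^E
        = ∑ a : F, ∑ i' ∈ Finset.range (m+1), f.coeff i' * a ^ (i' + E) := by
          refine Finset.sum_congr rfl fun a _ => ?_
          rw [eval_eq_sum_range' (Nat.lt_succ_of_le hf), Finset.sum_mul]
          exact Finset.sum_congr rfl fun i' _ => by rw [pow_add]; ring
      _ = _ := by
          rw [Finset.sum_comm]
          exact Finset.sum_congr rfl fun i' _ => (Finset.mul_sum _ _ _).symm
  have hset : RScode F m ∩ hermDualF q (RScode F m)
      = (Submodule.span F (e '' ↑goodS) : Set (F → F)) := by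
    ext w
    constructor
    · rintro ⟨⟨f, hf, hw⟩, hdual⟩
      have hcoeff : ∀ i ∈ badS, f.coeff i = 0 := by
        intro i hib
        rw [hbadS] at hib
        obtain ⟨⟨a, b⟩, hab, hieq⟩ := Finset.mem_image.mp hib
        simp only [Finset.mem_product, Finset.mem_range, Finset.mem_Ico] at hab
        have ha := hab.1
        have hb1 := hab.2.1
        have hb2 := hab.2.2
        have hieq' : i = (q-1-b)*q + (q-1-a) := hieq.symm
        obtain ⟨hiA, hj1, hjm, hKey, hpos, hlt, hbound⟩ := arith_A hq2 ht htr' hm' ha hb1 hb2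
        have hd := (mem_hermDual_iff hq m w).mp hdual (a*q+b) hjm
        have hd' : ∑ x : F, f.eval x * x ^ (q*(a*q+b)) = 0 := by
          rw [← hd]; exact Finset.sum_congr rfl fun x _ => by rw [hw x]
        rw [hsum f hf (q*(a*q+b))] at hd'
        have hz : ∀ i' ∈ Finset.range (m+1), i' ≠ i →
            f.coeff i' * ∑ x : F, x ^ (i' + q*(a*q+b)) = 0 := by
          intro i' hi' hne
          rw [S_bad_ne hF hq2 ht htr' hm' ha hb1 hb2
            (Nat.lt_succ_iff.mp (Finset.mem_range.mp hi'))
            (fun h => hne (by rw [h, ← hieq'])), mul_zero]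
        rw [Finset.sum_eq_single i hz
          (fun hnotin => absurd (Finset.mem_range.mpr (by omega)) hnotin)] at hd'
        rw [hieq'] at hd' ⊢
        rw [S_bad_eq hF hq2 ht htr' hm' ha hb1 hb2] at hd'
        simpa using hd'
      have hwsum : w = ∑ i' ∈ Finset.range (m+1), f.coeff i' • e i' := by
        funext x
        rw [hw x, eval_eq_sum_range' (Nat.lt_succ_of_le hf), Finset.sum_apply]
        exact Finset.sum_congr rfl fun i' _ => rfl
      refine SetLike.mem_coe.mpr ?_
      rw [hwsum]
      refine Submodule.sum_mem _ fun i' hi' => ?_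
      by_cases hbd : i' ∈ badS
      · rw [hcoeff i' hbd, zero_smul]
        exact Submodule.zero_mem _
      · exact Submodule.smul_mem _ _ (Submodule.subset_span
          ⟨i', Finset.mem_coe.mpr (Finset.mem_filter.mpr ⟨hi', hbd⟩), rfl⟩)
    · intro hwmem
      have hle : Submodule.span F (e '' ↑goodS) ≤ RSsub F m ⊓ hermSub q (RScode F m) := by
        rw [Submodule.span_le]
        rintro w' ⟨i, hi, rfl⟩
        have hi' := Finset.mem_coe.mp hi
        have him : i ≤ m := Nat.lt_succ_iff.mp (Finset.mem_range.mp (Finset.mem_filter.mp hi').1)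
        have hibad : i ∉ badS := (Finset.mem_filter.mp hi').2
        have hrs : e i ∈ RScode F m := ⟨Polynomial.X^i, by simpa using him, fun x => by simp [he]⟩
        refine Submodule.mem_inf.mpr ⟨hrs, ?_⟩
        show e i ∈ hermDualF q (RScode F m)
        rw [mem_hermDual_iff hq]
        intro j hj
        have hrw : ∑ x : F, e i x * x^(q*j) = ∑ x : F, x ^ (i + q*j) :=
          Finset.sum_congr rfl fun x _ => (pow_add x i (q*j)).symm
        rw [hrw]
        by_cases h0 : i = 0 ∧ j = 0
        · obtain ⟨h0i, h0j⟩ := h0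
          subst h0i; subst h0j
          simp only [Nat.mul_zero, Nat.add_zero, pow_zero]
          rw [Finset.sum_const, Finset.card_univ, nsmul_eq_mul, mul_one,
            FiniteField.cast_card_eq_zero]
        · refine S_good hF hq2 ht htr' hm' him hj h0 ?_
          intro a b ha hb1 hb2 hieq
          refine hibad ?_
          rw [hbadS]
          exact Finset.mem_image.mpr ⟨(a,b),
            Finset.mem_product.mpr ⟨Finset.mem_range.mpr ha, Finset.mem_Ico.mpr ⟨hb1, hb2⟩⟩,
            hieq.symm⟩
      have h2 := Submodule.mem_inf.mp (hle (SetLike.mem_coe.mp hwmem))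
      exact ⟨h2.1, h2.2⟩
  rw [hset, Submodule.span_eq]
  have hrange : Set.range (fun i : {x // x ∈ goodS} => e (i : ℕ)) = e '' ↑goodS := by
    rw [show (fun i : {x // x ∈ goodS} => e (i : ℕ)) = e ∘ Subtype.val from rfl,
      Set.range_comp]
    congr 1
    ext v
    simp
  rw [← hrange]
  have hli : LinearIndependent F (fun i : {x // x ∈ goodS} => e (i : ℕ)) := by
    have base := linearIndependent_ev (F := F)
    have hgm : ∀ i : {x // x ∈ goodS}, (i : ℕ) < Fintype.card F := fun i => by
      have h1 := Finset.mem_range.mp (Finset.mem_filter.mp i.2).1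
      rw [hcard]; omega
    exact base.comp (fun i : {x // x ∈ goodS} => (⟨(i:ℕ), hgm i⟩ : Fin (Fintype.card F)))
      (fun i j hij => Subtype.ext (by simpa using congrArg Fin.val hij))
  rw [finrank_span_eq_card hli, Fintype.card_coe]
  exact good_card hq2 ht htr' hm'
end Main
end
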